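/- Let n ≥ 1 be an integer. Then c(n) := ∫₀^∞ (e^s − 1)^{−1/(n+1)} ds is finite, and there exist ε₀ > 0 and C > 0 depending only on n such that the following holds. Let b < 0 and τ < 0 with |b|·|τ|^{n+1} ≤ ε₀, and suppose T ∈ ℝ satisfies ∫₀^{M} (e^s − 1)^{−1/(n+1)} ds = (n+1)^{1/(n+1)}·|b|^{1/(n+1)}·(τ − T), where M := −(n+1)·log|τ| − log|b| + n·log(n+1). Then |T + (n+1)^{−1/(n+1)}·c(n)·|b|^{−1/(n+1)}| ≤ C·|τ|. -/

import Mathlib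

open MeasureTheory

namespace Statement10Aux

lemma contOn (e : ℝ) : ContinuousOn (fun s : ℝ => (Real.exp s - 1) ^ e) (Set.Ioi 0) := by
  intro s hs
  have hs0 : (0:ℝ) < s := hs
  have h0 : (0:ℝ) < Real.exp s - 1 := by
    have := Real.add_one_le_exp s; linarith
  have h1 : ContinuousAt (fun s : ℝ => Real.exp s - 1) s :=
    (Real.continuous_exp.continuousAt).sub continuousAt_const
  exact (h1.rpow_const (Or.inl h0.ne')).continuousWithinAt

lemma pt_bound {e s : ℝ} (he : e ≤ 0) (hs : (2:ℝ) ≤ Real.exp s) :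
    (Real.exp s - 1) ^ e ≤ 2 ^ (-e) * Real.exp (e * s) := by
  have hpos : (0:ℝ) < Real.exp s / 2 := by positivity
  have h1 : Real.exp s / 2 ≤ Real.exp s - 1 := by linarith
  have h2 : (Real.exp s - 1) ^ e ≤ (Real.exp s / 2) ^ e :=
    Real.rpow_le_rpow_of_nonpos hpos h1 he
  have hee : Real.exp s ^ e = Real.exp (e * s) := by
    rw [Real.rpow_def_of_pos (Real.exp_pos s), Real.log_exp, mul_comm]
  have h3 : (Real.exp s / 2) ^ e = 2 ^ (-e) * Real.exp (e * s) := by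
    rw [Real.div_rpow (Real.exp_pos s).le (by norm_num : (0:ℝ) ≤ 2), hee,
      Real.rpow_neg (by norm_num : (0:ℝ) ≤ 2), div_eq_mul_inv, mul_comm]
  linarith [h2, h3.le, h3.ge]

lemma integrableF {e : ℝ} (he1 : -1 < e) (he0 : e < 0) :
    IntegrableOn (fun s : ℝ => (Real.exp s - 1) ^ e) (Set.Ioi 0) := by
  have hmeas : ∀ {t : Set ℝ}, MeasurableSet t → t ⊆ Set.Ioi 0 →
      AEStronglyMeasurable (fun s : ℝ => (Real.exp s - 1) ^ e) (volume.restrict t) :=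
    fun ht hsub => ((contOn e).mono hsub).aestronglyMeasurable ht
  have h1 : IntegrableOn (fun s : ℝ => (Real.exp s - 1) ^ e) (Set.Ioc 0 1) := by
    have hg : IntegrableOn (fun s : ℝ => s ^ e) (Set.Ioc 0 1) := by
      have := intervalIntegral.intervalIntegrable_rpow' (a := (0:ℝ)) (b := 1) he1
      rwa [intervalIntegrable_iff_integrableOn_Ioc_of_le zero_le_one] at this
    refine hg.mono' (hmeas measurableSet_Ioc Set.Ioc_subset_Ioi_self) ?_
    filter_upwards [ae_restrict_mem measurableSet_Ioc] with s hs
    have hs0 : 0 < s := hs.1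
    have hb : s ≤ Real.exp s - 1 := by linarith [Real.add_one_le_exp s]
    rw [Real.norm_eq_abs, abs_of_nonneg (Real.rpow_nonneg (by linarith) e)]
    exact Real.rpow_le_rpow_of_nonpos hs0 hb he0.le
  have h2 : IntegrableOn (fun s : ℝ => (Real.exp s - 1) ^ e) (Set.Ioi 1) := by
    have hg : IntegrableOn (fun s : ℝ => 2 ^ (-e) * Real.exp (e * s)) (Set.Ioi 1) := by
      have := (exp_neg_integrableOn_Ioi (1:ℝ) (b := -e) (by linarith)).const_mul ((2:ℝ) ^ (-e))
      simpa [neg_neg, IntegrableOn] using this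
    refine hg.mono' (hmeas measurableSet_Ioi (fun x hx => Set.mem_Ioi.mpr (lt_trans zero_lt_one hx))) ?_
    filter_upwards [ae_restrict_mem measurableSet_Ioi] with s hs
    have h2e : (2:ℝ) ≤ Real.exp s := by
      have h1e := Real.add_one_le_exp (1:ℝ)
      calc (2:ℝ) ≤ Real.exp 1 := by linarith
        _ ≤ Real.exp s := Real.exp_le_exp.mpr (le_of_lt hs)
    have hpos : (0:ℝ) < Real.exp s - 1 := by linarith
    rw [Real.norm_eq_abs, abs_of_nonneg (Real.rpow_nonneg hpos.le e)]
    exact pt_bound he0.le h2e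
  have := h1.union h2
  rwa [Set.Ioc_union_Ioi_eq_Ioi zero_le_one] at this

lemma tail_exp {e : ℝ} (he : e < 0) (M : ℝ) :
    ∫ s in Set.Ioi M, Real.exp (e * s) = Real.exp (e * M) / (-e) := by
  have hderiv : ∀ x ∈ Set.Ici M,
      HasDerivAt (fun x => Real.exp (e * x) / e) (Real.exp (e * x)) x := by
    intro x _
    have h1 : HasDerivAt (fun x : ℝ => e * x) e x := by
      simpa using (hasDerivAt_id x).const_mul e
    have h2 := (Real.hasDerivAt_exp (e * x)).comp x h1
    have h3 := h2.div_const e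
    simpa [mul_div_assoc, div_self (ne_of_lt he), mul_one] using h3
  have hint : IntegrableOn (fun x => Real.exp (e * x)) (Set.Ioi M) := by
    have := exp_neg_integrableOn_Ioi M (b := -e) (by linarith)
    simpa [neg_neg] using this
  have htend : Filter.Tendsto (fun x => Real.exp (e * x) / e) Filter.atTop (nhds 0) := by
    have h1 : Filter.Tendsto (fun x : ℝ => e * x) Filter.atTop Filter.atBot :=
      (Filter.tendsto_const_mul_atBot_of_neg he).mpr Filter.tendsto_id
    have h2 : Filter.Tendsto (fun x : ℝ => Real.exp (e * x)) Filter.atTop (nhds 0) :=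
      Real.tendsto_exp_comp_nhds_zero.mpr h1
    simpa using h2.div_const e
  have := MeasureTheory.integral_Ioi_of_hasDerivAt_of_tendsto' hderiv hint htend
  rw [this, zero_sub, div_neg]

end Statement10Aux

open Statement10Aux

/-- `c(n) := ∫₀^∞ (e^s − 1)^(−1/(n+1)) ds` is finite, and there exist
`ε₀, C > 0` depending only on `n` such that whenever `b < 0`, `τ < 0`,
`|b|·|τ|^(n+1) ≤ ε₀` and `T` satisfies the horn-position relation
`∫₀^M (e^s−1)^(−1/(n+1)) ds = (n+1)^(1/(n+1))·|b|^(1/(n+1))·(τ−T)` with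
`M = −(n+1)·log|τ| − log|b| + n·log(n+1)`, one has
`|T + (n+1)^(−1/(n+1))·c(n)·|b|^(−1/(n+1))| ≤ C·|τ|`. -/
theorem statement10 (n : ℕ) (hn : 1 ≤ n) :
    IntegrableOn (fun s : ℝ => (Real.exp s - 1) ^ (-(1 : ℝ) / ((n : ℝ) + 1)))
        (Set.Ioi 0) ∧
    ∃ ε₀ : ℝ, 0 < ε₀ ∧ ∃ C : ℝ, 0 < C ∧
      ∀ b τ T : ℝ, b < 0 → τ < 0 → |b| * |τ| ^ (n + 1) ≤ ε₀ →
        (∫ s in (0 : ℝ)..(-((n : ℝ) + 1) * Real.log |τ| - Real.log |b| +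
              (n : ℝ) * Real.log ((n : ℝ) + 1)),
            (Real.exp s - 1) ^ (-(1 : ℝ) / ((n : ℝ) + 1))) =
          ((n : ℝ) + 1) ^ ((1 : ℝ) / ((n : ℝ) + 1)) * |b| ^ ((1 : ℝ) / ((n : ℝ) + 1)) *
            (τ - T) →
        |T + ((n : ℝ) + 1) ^ (-(1 : ℝ) / ((n : ℝ) + 1)) *
            (∫ s in Set.Ioi (0 : ℝ), (Real.exp s - 1) ^ (-(1 : ℝ) / ((n : ℝ) + 1))) *
            |b| ^ (-(1 : ℝ) / ((n : ℝ) + 1))| ≤ C * |τ| := by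
  set e : ℝ := -(1 : ℝ) / ((n : ℝ) + 1) with he_def
  have hn1 : (0:ℝ) < (n:ℝ) + 1 := by positivity
  have hn1' : (1:ℝ) ≤ (n:ℝ) + 1 := by
    have : (0:ℝ) ≤ (n:ℝ) := Nat.cast_nonneg n
    linarith
  have hnR : (1:ℝ) ≤ (n:ℝ) := by exact_mod_cast hn
  have he0 : e < 0 := by
    rw [he_def]
    apply div_neg_of_neg_of_pos <;> [norm_num; exact hn1]
  have he1 : -1 < e := by
    rw [he_def, neg_div, neg_lt_neg_iff, div_lt_one hn1]
    linarith
  have hene : e * ((n:ℝ) + 1) = -1 := by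
    rw [he_def]; field_simp
  have hneg_e : -e = ((n:ℝ) + 1)⁻¹ := by
    rw [he_def]; field_simp
  have hInt : IntegrableOn (fun s : ℝ => (Real.exp s - 1) ^ e) (Set.Ioi 0) :=
    integrableF he1 he0
  refine ⟨hInt, ((n:ℝ)+1)^n / 2, by positivity, 3, by norm_num, ?_⟩
  intro b τ T hb hτ hε hrel
  have hbpos : (0:ℝ) < |b| := abs_pos.mpr hb.ne
  have hτpos : (0:ℝ) < |τ| := abs_pos.mpr hτ.ne
  set M : ℝ := -((n : ℝ) + 1) * Real.log |τ| - Real.log |b| +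
      (n : ℝ) * Real.log ((n : ℝ) + 1) with hM_def
  -- `log 2 ≤ M`
  have hlog1 : Real.log (|b| * |τ| ^ (n+1)) = Real.log |b| + ((n:ℝ)+1) * Real.log |τ| := by
    rw [Real.log_mul hbpos.ne' (pow_pos hτpos _).ne', Real.log_pow]
    push_cast; ring
  have hlog2 : Real.log (((n:ℝ)+1)^n / 2) = (n:ℝ) * Real.log ((n:ℝ)+1) - Real.log 2 := by
    rw [Real.log_div (by positivity) (by norm_num), Real.log_pow]
  have hloge : Real.log (|b| * |τ| ^ (n+1)) ≤ Real.log (((n:ℝ)+1)^n / 2) :=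
    Real.log_le_log (by positivity) hε
  have hM2 : Real.log 2 ≤ M := by
    rw [hM_def]; rw [hlog1, hlog2] at hloge; linarith
  have hMpos : 0 < M := lt_of_lt_of_le (Real.log_pos one_lt_two) hM2
  -- value of `exp (e * M)`
  have heM : Real.exp (e * M) = |τ| * |b| ^ (-e) * ((n:ℝ)+1) ^ ((n:ℝ) * e) := by
    rw [Real.rpow_def_of_pos hbpos, Real.rpow_def_of_pos hn1,
      ← Real.exp_log hτpos, ← Real.exp_add, ← Real.exp_add]
    congr 1
    have h : e * M = (-(e * ((n:ℝ)+1))) * Real.log |τ| + Real.log |b| * (-e) +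
        Real.log ((n:ℝ)+1) * ((n:ℝ) * e) := by
      rw [hM_def]; ring
    rw [h, hene]; ring
  -- split the integral
  have hIoc : IntegrableOn (fun s : ℝ => (Real.exp s - 1) ^ e) (Set.Ioc 0 M) :=
    hInt.mono_set Set.Ioc_subset_Ioi_self
  have hIoiM : IntegrableOn (fun s : ℝ => (Real.exp s - 1) ^ e) (Set.Ioi M) :=
    hInt.mono_set (Set.Ioi_subset_Ioi hMpos.le)
  have hsplit : (∫ s in Set.Ioi (0:ℝ), (Real.exp s - 1) ^ e) =
      (∫ s in Set.Ioc (0:ℝ) M, (Real.exp s - 1) ^ e) +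
      ∫ s in Set.Ioi M, (Real.exp s - 1) ^ e := by
    rw [← MeasureTheory.setIntegral_union (Set.Ioc_disjoint_Ioi le_rfl) measurableSet_Ioi
        hIoc hIoiM, Set.Ioc_union_Ioi_eq_Ioi hMpos.le]
  set R : ℝ := ∫ s in Set.Ioi M, (Real.exp s - 1) ^ e with hR_def
  have hR0 : 0 ≤ R := by
    rw [hR_def]
    apply MeasureTheory.setIntegral_nonneg measurableSet_Ioi
    intro s hs
    have : (0:ℝ) < s := lt_trans hMpos hs
    have := Real.add_one_le_exp s
    exact Real.rpow_nonneg (by linarith) e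
  -- tail bound
  have hgM : IntegrableOn (fun s => (2:ℝ) ^ (-e) * Real.exp (e * s)) (Set.Ioi M) := by
    have := (exp_neg_integrableOn_Ioi M (b := -e) (by linarith)).const_mul ((2:ℝ) ^ (-e))
    simpa [neg_neg, IntegrableOn] using this
  have hRle : R ≤ 2 ^ (-e) * (Real.exp (e * M) / (-e)) := by
    have hmono := MeasureTheory.setIntegral_mono_on hIoiM hgM measurableSet_Ioi ?_
    · rw [hR_def]
      calc (∫ s in Set.Ioi M, (Real.exp s - 1) ^ e)
          ≤ ∫ s in Set.Ioi M, (2:ℝ) ^ (-e) * Real.exp (e * s) := hmono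
        _ = (2:ℝ) ^ (-e) * ∫ s in Set.Ioi M, Real.exp (e * s) := by
            rw [MeasureTheory.integral_const_mul]
        _ = 2 ^ (-e) * (Real.exp (e * M) / (-e)) := by rw [tail_exp he0 M]
    · intro s hs
      have h2e : (2:ℝ) ≤ Real.exp s := by
        calc (2:ℝ) = Real.exp (Real.log 2) := (Real.exp_log (by norm_num)).symm
          _ ≤ Real.exp s := Real.exp_le_exp.mpr (le_trans hM2 (le_of_lt hs))
      exact pt_bound he0.le h2e
  -- relate `T` to the tail
  have hme : ((1:ℝ)/((n:ℝ)+1)) = -e := by rw [he_def]; ring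
  rw [hme, intervalIntegral.integral_of_le hMpos.le] at hrel
  have hBn : (0:ℝ) < ((n:ℝ)+1) ^ e := Real.rpow_pos_of_pos hn1 e
  have hBb : (0:ℝ) < |b| ^ e := Real.rpow_pos_of_pos hbpos e
  have hAB : (((n:ℝ)+1) ^ (-e) * |b| ^ (-e)) * (((n:ℝ)+1) ^ e * |b| ^ e) = 1 := by
    rw [mul_mul_mul_comm, ← Real.rpow_add hn1, ← Real.rpow_add hbpos, neg_add_cancel,
      Real.rpow_zero, Real.rpow_zero, mul_one]
  have key : T + ((n:ℝ)+1) ^ e *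
      (∫ s in Set.Ioi (0:ℝ), (Real.exp s - 1) ^ e) * |b| ^ e =
      τ + (((n:ℝ)+1) ^ e * |b| ^ e) * R := by
    rw [hsplit, hrel]
    linear_combination (τ - T) * hAB
  -- bound `B * R`
  have hf1 : |b| ^ e * |b| ^ (-e) = 1 := by
    rw [← Real.rpow_add hbpos, add_neg_cancel, Real.rpow_zero]
  have hf2 : ((n:ℝ)+1) ^ e * ((n:ℝ)+1) ^ ((n:ℝ) * e) * ((n:ℝ)+1) = 1 := by
    rw [← Real.rpow_add hn1]
    have hsum : e + (n:ℝ) * e = -1 := by linear_combination hene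
    rw [hsum, Real.rpow_neg_one]
    exact inv_mul_cancel₀ hn1.ne'
  have hBR : (((n:ℝ)+1) ^ e * |b| ^ e) * R ≤ 2 * |τ| := by
    have h1 : (((n:ℝ)+1) ^ e * |b| ^ e) * R ≤
        (((n:ℝ)+1) ^ e * |b| ^ e) * (2 ^ (-e) * (Real.exp (e * M) / (-e))) :=
      mul_le_mul_of_nonneg_left hRle (by positivity)
    have h2 : (((n:ℝ)+1) ^ e * |b| ^ e) * (2 ^ (-e) * (Real.exp (e * M) / (-e))) =
        2 ^ (-e) * |τ| := by
      have hdiv : Real.exp (e * M) / (-e) = Real.exp (e * M) * ((n:ℝ)+1) := by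
        rw [hneg_e, div_eq_mul_inv, inv_inv]
      rw [hdiv, heM]
      linear_combination (2:ℝ) ^ (-e) * |τ| * (((n:ℝ)+1) ^ e * ((n:ℝ)+1) ^ ((n:ℝ) * e) *
        ((n:ℝ)+1)) * hf1 + (2:ℝ) ^ (-e) * |τ| * hf2
    have h4 : (2:ℝ) ^ (-e) ≤ 2 := by
      calc (2:ℝ) ^ (-e) ≤ (2:ℝ) ^ (1:ℝ) := by
            apply Real.rpow_le_rpow_of_exponent_le one_le_two
            rw [hneg_e]
            exact inv_le_one_of_one_le₀ hn1'
        _ = 2 := Real.rpow_one 2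
    calc (((n:ℝ)+1) ^ e * |b| ^ e) * R ≤ 2 ^ (-e) * |τ| := by rw [← h2]; exact h1
      _ ≤ 2 * |τ| := mul_le_mul_of_nonneg_right h4 (abs_nonneg τ)
  -- conclude
  rw [key]
  have hBRnn : 0 ≤ (((n:ℝ)+1) ^ e * |b| ^ e) * R := by positivity
  calc |τ + (((n:ℝ)+1) ^ e * |b| ^ e) * R|
      ≤ |τ| + |(((n:ℝ)+1) ^ e * |b| ^ e) * R| := abs_add_le _ _
    _ = |τ| + (((n:ℝ)+1) ^ e * |b| ^ e) * R := by rw [abs_of_nonneg hBRnn]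
    _ ≤ |τ| + 2 * |τ| := by linarith
    _ = 3 * |τ| := by ring
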